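/- A cycle C in a graph G without isolated vertices is a Hamiltonian cycle if and only if for every edge cut 𝒞 of G, the number of edges of C lying in 𝒞 is even and at least 2. -/

import Mathlib

private lemma cut_parity {V : Type*} [Fintype V] [DecidableEq V] {G : SimpleGraph V}
    (s : Finset V) [DecidablePred (· ∈ s)] {u w : V} (p : G.Walk u w) :
    Even (p.edges.countP (fun e => decide (∃ a ∈ s, ∃ b ∈ sᶜ, e = s(a, b)))) ↔
      (u ∈ s ↔ w ∈ s) := by
  induction p with
  | nil => simp
  | @cons u x w h p ih =>
    rw [SimpleGraph.Walk.edges_cons, List.countP_cons]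
    by_cases hc : ∃ a ∈ s, ∃ b ∈ sᶜ, s(u, x) = s(a, b)
    · have hux : ¬ (u ∈ s ↔ x ∈ s) := by
        obtain ⟨a, ha, b, hb, hab⟩ := hc
        rw [Finset.mem_compl] at hb
        rw [Sym2.eq_iff] at hab
        rcases hab with ⟨rfl, rfl⟩ | ⟨rfl, rfl⟩ <;> tauto
      simp only [hc, decide_eq_true_eq, if_pos, Nat.even_add_one, ih]
      tauto
    · have hux : (u ∈ s ↔ x ∈ s) := by
        by_contra hne
        by_cases hus : u ∈ s
        · exact hc ⟨u, hus, x,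
            Finset.mem_compl.mpr (fun hx => hne ⟨fun _ => hx, fun _ => hus⟩), rfl⟩
        · have hxs : x ∈ s := by tauto
          exact hc ⟨x, hxs, u, Finset.mem_compl.mpr hus, Sym2.eq_swap⟩
      simp only [hc, decide_eq_true_eq, if_neg, not_false_iff, add_zero, ih]
      tauto

private lemma cut_cross {V : Type*} [Fintype V] [DecidableEq V] {G : SimpleGraph V}
    (s : Finset V) {u w : V} (p : G.Walk u w) (h : ¬ (u ∈ s ↔ w ∈ s)) :
    ∃ e ∈ p.edges, ∃ a ∈ s, ∃ b ∈ sᶜ, e = s(a, b) := by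
  induction p with
  | nil => exact absurd Iff.rfl h
  | @cons u x w hadj p ih =>
    by_cases hx : (u ∈ s ↔ x ∈ s)
    · obtain ⟨e, he, hP⟩ := ih (by tauto)
      exact ⟨e, List.mem_cons_of_mem _ he, hP⟩
    · refine ⟨s(u, x), List.mem_cons_self, ?_⟩
      rcases Decidable.not_iff.mp hx with ⟨hu, hx'⟩
      by_cases hus : u ∈ s
      · exact ⟨u, hus, x, Finset.mem_compl.mpr (by tauto), rfl⟩
      · exact ⟨x, by tauto, u, Finset.mem_compl.mpr hus, Sym2.eq_swap⟩

theorem hamiltonian_cycle_iff_edge_cuts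
    {V : Type*} [Fintype V] [DecidableEq V]
    (G : SimpleGraph V) [DecidableRel G.Adj]
    (hiso : ∀ v : V, 0 < G.degree v)
    {v : V} (C : G.Walk v v) (hC : C.IsCycle) :
    C.IsHamiltonianCycle ↔
      ∀ s : Finset V, s.Nonempty → sᶜ.Nonempty →
        Even {e : Sym2 V | e ∈ C.edges ∧ ∃ a ∈ s, ∃ b ∈ (sᶜ : Finset V), e = s(a, b)}.ncard ∧
        2 ≤ {e : Sym2 V | e ∈ C.edges ∧ ∃ a ∈ s, ∃ b ∈ (sᶜ : Finset V), e = s(a, b)}.ncard := by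
  have hcard : ∀ s : Finset V,
      {e : Sym2 V | e ∈ C.edges ∧ ∃ a ∈ s, ∃ b ∈ (sᶜ : Finset V), e = s(a, b)}.ncard =
        C.edges.countP (fun e => decide (∃ a ∈ s, ∃ b ∈ sᶜ, e = s(a, b))) := by
    intro s
    have hset : {e : Sym2 V | e ∈ C.edges ∧ ∃ a ∈ s, ∃ b ∈ (sᶜ : Finset V), e = s(a, b)} =
        ↑((C.edges.filter (fun e => decide (∃ a ∈ s, ∃ b ∈ sᶜ, e = s(a, b)))).toFinset) := by
      ext e; simp [List.mem_filter]
    rw [hset, Set.ncard_coe_finset,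
      List.toFinset_card_of_nodup (hC.edges_nodup.filter _),
      ← List.countP_eq_length_filter]
  constructor
  · intro hHam s hs hsc
    rw [hcard s]
    have heven : Even (C.edges.countP (fun e => decide (∃ a ∈ s, ∃ b ∈ sᶜ, e = s(a, b)))) :=
      (cut_parity s C).mpr Iff.rfl
    refine ⟨heven, ?_⟩
    -- find a crossing edge
    have hpos : 0 < C.edges.countP (fun e => decide (∃ a ∈ s, ∃ b ∈ sᶜ, e = s(a, b))) := by
      have : ∃ e ∈ C.edges, ∃ a ∈ s, ∃ b ∈ sᶜ, e = s(a, b) := by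
        by_cases hv : v ∈ s
        · obtain ⟨b, hb⟩ := hsc
          have hbsup : b ∈ C.support := hHam.mem_support b
          obtain ⟨e, he, hP⟩ := cut_cross s (C.takeUntil b hbsup)
            (by rw [Finset.mem_compl] at hb; tauto)
          exact ⟨e, C.edges_takeUntil_subset hbsup he, hP⟩
        · obtain ⟨a, ha⟩ := hs
          have hasup : a ∈ C.support := hHam.mem_support a
          obtain ⟨e, he, hP⟩ := cut_cross s (C.takeUntil a hasup) (by tauto)
          exact ⟨e, C.edges_takeUntil_subset hasup he, hP⟩
      obtain ⟨e, he, hP⟩ := this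
      exact List.countP_pos_iff.mpr ⟨e, he, by simpa using hP⟩
    obtain ⟨k, hk⟩ := heven
    omega
  · intro h
    rw [SimpleGraph.Walk.isHamiltonianCycle_iff_isCycle_and_support_count_tail_eq_one]
    refine ⟨hC, ?_⟩
    intro a
    -- show every vertex is in the support
    have hall : ∀ a : V, a ∈ C.support := by
      intro a
      by_contra hna
      set s : Finset V := C.support.toFinset with hs
      have hsne : s.Nonempty := ⟨v, by simp [hs]⟩
      have hscne : sᶜ.Nonempty := ⟨a, by simp [hs, hna]⟩
      obtain ⟨-, h2⟩ := h s hsne hscne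
      have hempty : {e : Sym2 V | e ∈ C.edges ∧ ∃ x ∈ s, ∃ b ∈ (sᶜ : Finset V), e = s(x, b)} = ∅ := by
        ext e
        simp only [Set.mem_setOf_eq, Set.mem_empty_iff_false, iff_false, not_and]
        rintro he ⟨x, hx, b, hb, rfl⟩
        have := SimpleGraph.Walk.snd_mem_support_of_mem_edges C he
        simp [hs] at hb
        exact hb this
      rw [hempty] at h2
      simp at h2
    have hmem : a ∈ C.support.tail := by
      have := hall a
      cases C with
      | nil => exact absurd rfl hC.ne_nil
      | cons hadj p =>
        rw [SimpleGraph.Walk.support_cons] at this ⊢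
        simp only [List.tail_cons]
        rcases List.mem_cons.mp this with rfl | hmem
        · exact SimpleGraph.Walk.end_mem_support p
        · exact hmem
    exact List.count_eq_one_of_mem hC.support_nodup hmem
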